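/- arXiv:2602.04490 — 3 statements merged into one kernel-verified Lean document; each statement's English description precedes it below -/
import Mathlib

section
/- Let 𝒯 be a finite collection of pairwise disjoint Borel subsets of ℝ^d, each with positive finite Lebesgue measure, let D := ∪_{K∈𝒯} K, and let f be Borel measurable with f ∈ L²(D). For each K ∈ 𝒯 let X_1^K,…,X_{N_K}^K be i.i.d. with law 𝒰(K). With Π̂_0 f := Σ_{K∈𝒯} f̂_K 1_K, where f̂_K := N_K^{-1} Σ_{i=1}^{N_K} f(X_i^K), and with f_K := |K|^{-1} ∫_K f dλ, one has 𝔼[ ‖f − Π̂_0 f‖²_{L²(D)} ] = Σ_{K∈𝒯} (1 + 1/N_K) ∫_K |f − f_K|² dλ; in particular 𝔼[‖f − Π̂_0 f‖²_{L²(D)}] ≤ Σ_{K∈𝒯} (1 + 1/N_K) ‖f − Π_0 f‖²_{L²(K)}. -/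
open MeasureTheory ProbabilityTheory Finset

/-- The uniform distribution `𝒰(K)` on a Borel set `K ⊆ ℝ^d` of positive finite
Lebesgue measure: `|K|⁻¹ · λ|_K`. -/
noncomputable def uniformOn' {d : ℕ} (K : Set (Fin d → ℝ)) :
    Measure (Fin d → ℝ) :=
  (volume K)⁻¹ • volume.restrict K

private lemma uniformAux_mem {d : ℕ} {Ω : Type*} [MeasurableSpace Ω] {P : Measure Ω}
    (K : Set (Fin d → ℝ)) (hK0 : 0 < volume K)
    (g : (Fin d → ℝ) → ℝ) (hgK : MemLp g 2 (volume.restrict K))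
    (X : Ω → (Fin d → ℝ)) (hXm : Measurable X)
    (hXlaw : Measure.map X P = uniformOn' K) :
    MemLp (fun ω => g (X ω)) 2 P := by
  have hne : (volume K)⁻¹ ≠ ⊤ := ENNReal.inv_ne_top.mpr hK0.ne'
  have hgU : MemLp g 2 (uniformOn' K) := by
    simpa [uniformOn'] using hgK.smul_measure hne
  have h : MemLp g 2 (Measure.map X P) := hXlaw ▸ hgU
  exact (memLp_map_measure_iff (hXlaw ▸ hgU.aestronglyMeasurable)
    hXm.aemeasurable).mp h

private lemma uniformAux_int {d : ℕ} {Ω : Type*} [MeasurableSpace Ω] {P : Measure Ω}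
    (K : Set (Fin d → ℝ))
    (g : (Fin d → ℝ) → ℝ) (hg : Measurable g)
    (X : Ω → (Fin d → ℝ)) (hXm : Measurable X)
    (hXlaw : Measure.map X P = uniformOn' K) :
    ∫ ω, g (X ω) ∂P = (volume K).toReal⁻¹ * ∫ x in K, g x ∂volume := by
  have h1 : ∫ ω, g (X ω) ∂P = ∫ x, g x ∂(Measure.map X P) :=
    (integral_map hXm.aemeasurable (by rw [hXlaw]; exact hg.aestronglyMeasurable)).symm
  rw [h1, hXlaw, uniformOn', integral_smul_measure, ENNReal.toReal_inv, smul_eq_mul]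

/-- **Expected `L²(D)` error of the randomized piecewise constant projection `Π̂₀`.**
Let `𝒯 = (K i)_{i : ι}` be a finite collection of pairwise disjoint Borel subsets of
`ℝ^d` of positive finite measure with union `D`, `f ∈ L²(D)` Borel, and for each cell
`X^i_1, …, X^i_{N i}` i.i.d. `∼ 𝒰(K i)`.  With
`Π̂₀ f := ∑ i f̂_i 1_{K i}`, `f̂_i := (N i)⁻¹ ∑ j f (X^i_j)` and
`f_i := |K i|⁻¹ ∫_{K i} f dλ` one has
`𝔼[‖f − Π̂₀ f‖²_{L²(D)}] = ∑ i (1 + 1/N i) ∫_{K i} |f − f_i|² dλ`, in particular the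
left-hand side is `≤ ∑ i (1 + 1/N i) ‖f − Π₀ f‖²_{L²(K i)}`. -/
theorem randomized_piecewise_constant_L2_error
    {d : ℕ} {Ω : Type*} [MeasurableSpace Ω] {P : Measure Ω} [IsProbabilityMeasure P]
    {ι : Type*} [Fintype ι]
    (K : ι → Set (Fin d → ℝ)) (hK : ∀ i, MeasurableSet (K i))
    (hK0 : ∀ i, 0 < volume (K i)) (hKtop : ∀ i, volume (K i) < ⊤)
    (hdisj : Pairwise (Function.onFun Disjoint K))
    (f : (Fin d → ℝ) → ℝ) (hf : Measurable f)
    (hfL2 : MemLp f 2 (volume.restrict (⋃ i, K i)))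
    (N : ι → ℕ) (hN : ∀ i, 0 < N i)
    (X : (i : ι) → Fin (N i) → Ω → (Fin d → ℝ))
    (hXm : ∀ i j, Measurable (X i j))
    (hXlaw : ∀ i j, Measure.map (X i j) P = uniformOn' (K i))
    (hXindep : iIndepFun
      (fun (p : Σ i : ι, Fin (N i)) => X p.1 p.2) P)
    -- the randomized projection `Π̂₀ f` and the orthogonal projection `Π₀ f`
    (Phat : Ω → (Fin d → ℝ) → ℝ)
    (hPhat : ∀ ω x, Phat ω x
      = ∑ i : ι, Set.indicator (K i)
          (fun _ => (N i : ℝ)⁻¹ * ∑ j : Fin (N i), f (X i j ω)) x)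
    (P0f : (Fin d → ℝ) → ℝ)
    (hP0f : ∀ x, P0f x
      = ∑ i : ι, Set.indicator (K i)
          (fun _ => (volume (K i)).toReal⁻¹ * ∫ y in K i, f y ∂volume) x) :
    (∫ ω, (∫ x in ⋃ i, K i, (f x - Phat ω x) ^ 2 ∂volume) ∂P
        = ∑ i : ι, (1 + 1 / (N i : ℝ))
            * ∫ x in K i,
                (f x - (volume (K i)).toReal⁻¹ * ∫ y in K i, f y ∂volume) ^ 2 ∂volume)
    ∧ (∫ ω, (∫ x in ⋃ i, K i, (f x - Phat ω x) ^ 2 ∂volume) ∂P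
        ≤ ∑ i : ι, (1 + 1 / (N i : ℝ))
            * ∫ x in K i, (f x - P0f x) ^ 2 ∂volume) := by
  classical
  -- abbreviations
  set V : ι → ℝ := fun i => (volume (K i)).toReal with hVdef
  set m : ι → ℝ := fun i => (V i)⁻¹ * ∫ y in K i, f y ∂volume with hmdef
  set S : ι → Ω → ℝ := fun i ω => (N i : ℝ)⁻¹ * ∑ j : Fin (N i), f (X i j ω) with hSdef
  set A : ι → ℝ := fun i => ∫ x in K i, (f x - m i) ^ 2 ∂volume with hAdef
  have hV0 : ∀ i, 0 < V i := fun i => ENNReal.toReal_pos (hK0 i).ne' (hKtop i).ne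
  have hfin : ∀ i, IsFiniteMeasure (volume.restrict (K i)) := fun i =>
    ⟨by rw [Measure.restrict_apply_univ]; exact hKtop i⟩
  have hfK2 : ∀ i, MemLp f 2 (volume.restrict (K i)) := fun i =>
    hfL2.mono_measure (Measure.restrict_mono (Set.subset_iUnion K i) le_rfl)
  have hfK1 : ∀ i, IntegrableOn f (K i) volume := fun i => by
    haveI := hfin i; exact (hfK2 i).integrable one_le_two
  have hintf : ∀ i, ∫ x in K i, f x ∂volume = V i * m i := by
    intro i
    rw [hmdef]
    simp only
    rw [← mul_assoc, mul_inv_cancel₀ (hV0 i).ne', one_mul]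
  -- expansion of quadratic set integrals
  have expand : ∀ (i : ι) (c : ℝ), ∫ x in K i, (f x - c) ^ 2 ∂volume
      = (∫ x in K i, (f x) ^ 2 ∂volume) - 2 * c * (∫ x in K i, f x ∂volume)
        + V i * c ^ 2 := by
    intro i c
    haveI := hfin i
    have h1 : IntegrableOn (fun x => (f x) ^ 2) (K i) volume := (hfK2 i).integrable_sq
    have h2 : IntegrableOn (fun x => (2 * c) * f x) (K i) volume :=
      (hfK1 i).const_mul _
    have he : ∀ x : Fin d → ℝ, (f x - c) ^ 2 = (f x) ^ 2 - (2 * c) * f x + c ^ 2 := by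
      intro x; ring
    have h12 : IntegrableOn (fun x => (f x) ^ 2 - (2 * c) * f x) (K i) volume :=
      h1.sub h2
    simp_rw [he]
    rw [integral_add h12 (integrable_const _), integral_sub h1 h2,
      integral_const_mul, setIntegral_const, smul_eq_mul]
    rfl
  have decomp : ∀ (i : ι) (c : ℝ), ∫ x in K i, (f x - c) ^ 2 ∂volume
      = A i + V i * (c - m i) ^ 2 := by
    intro i c
    rw [expand i c, hAdef]
    simp only
    rw [expand i (m i), hintf i]
    ring
  have hA : ∀ i, A i = (∫ x in K i, (f x) ^ 2 ∂volume) - V i * (m i) ^ 2 := by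
    intro i
    rw [hAdef]
    simp only
    rw [expand i (m i), hintf i]
    ring
  -- moments of f(X i j)
  have hY2 : ∀ i j, MemLp (fun ω => f (X i j ω)) 2 P := fun i j =>
    uniformAux_mem (K i) (hK0 i) f (hfK2 i) (X i j) (hXm i j) (hXlaw i j)
  have hEY : ∀ i j, ∫ ω, f (X i j ω) ∂P = m i := fun i j =>
    uniformAux_int (K i) f hf (X i j) (hXm i j) (hXlaw i j)
  have hEY2 : ∀ i j, ∫ ω, (f (X i j ω)) ^ 2 ∂P
      = (V i)⁻¹ * ∫ x in K i, (f x) ^ 2 ∂volume := fun i j =>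
    uniformAux_int (K i) (fun x => f x ^ 2) (hf.pow_const 2) (X i j) (hXm i j) (hXlaw i j)
  -- variance of a single sample
  have varY : ∀ i j, variance (fun ω => f (X i j ω)) P = (V i)⁻¹ * A i := by
    intro i j
    rw [variance_eq_sub (hY2 i j)]
    have e1 : (P[(fun ω => f (X i j ω)) ^ 2] : ℝ) = ∫ ω, (f (X i j ω)) ^ 2 ∂P := rfl
    have e2 : (P[fun ω => f (X i j ω)] : ℝ) = ∫ ω, f (X i j ω) ∂P := rfl
    rw [e1, e2, hEY2 i j, hEY i j, hA i]
    rw [mul_sub, ← mul_assoc, inv_mul_cancel₀ (hV0 i).ne', one_mul]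
  -- moments of the empirical mean S i
  have hS2 : ∀ i, MemLp (S i) 2 P := by
    intro i
    have h := memLp_finset_sum (μ := P) (f := fun j ω => f (X i j ω)) univ
      (fun j _ => hY2 i j)
    exact h.const_mul _
  have hES : ∀ i, ∫ ω, S i ω ∂P = m i := by
    intro i
    rw [hSdef]
    simp only
    rw [integral_const_mul, integral_finset_sum _ (fun j _ => (hY2 i j).integrable one_le_two)]
    simp_rw [hEY i]
    rw [Finset.sum_const, card_univ, Fintype.card_fin, nsmul_eq_mul,
      ← mul_assoc, inv_mul_cancel₀ (by exact_mod_cast (hN i).ne' : (N i : ℝ) ≠ 0), one_mul]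
  have varS : ∀ i, ∫ ω, (S i ω - m i) ^ 2 ∂P = (N i : ℝ)⁻¹ * ((V i)⁻¹ * A i) := by
    intro i
    have hNne : (N i : ℝ) ≠ 0 := by exact_mod_cast (hN i).ne'
    have hSeq : S i = (N i : ℝ)⁻¹ • (∑ j : Fin (N i), fun ω => f (X i j ω)) := by
      funext ω
      simp [hSdef, Finset.sum_apply, smul_eq_mul]
    have hpind : Set.Pairwise ↑(univ : Finset (Fin (N i)))
        (fun j j' => IndepFun (fun ω => f (X i j ω)) (fun ω => f (X i j' ω)) P) := by
      intro j _ j' _ hjj'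
      have h1 : IndepFun (X i j) (X i j') P :=
        hXindep.indepFun (by simpa using hjj' : (⟨i, j⟩ : Σ i, Fin (N i)) ≠ ⟨i, j'⟩)
      exact h1.comp hf hf
    have hv : variance (S i) P = (N i : ℝ)⁻¹ * ((V i)⁻¹ * A i) := by
      rw [hSeq, variance_smul,
        IndepFun.variance_sum (fun j _ => hY2 i j) hpind]
      simp_rw [varY i]
      rw [Finset.sum_const, card_univ, Fintype.card_fin, nsmul_eq_mul]
      have hcan : (N i : ℝ) * ((N i : ℝ))⁻¹ ^ 2 = (N i : ℝ)⁻¹ := by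
        rw [sq, ← mul_assoc, mul_inv_cancel₀ hNne, one_mul]
      linear_combination ((V i)⁻¹ * A i) * hcan
    rw [← hv, variance_eq_integral (hS2 i).aemeasurable, hES i]
  -- pointwise (in ω) splitting of the inner integral
  have hsplit : ∀ ω, ∫ x in ⋃ i, K i, (f x - Phat ω x) ^ 2 ∂volume
      = ∑ i : ι, (A i + V i * (S i ω - m i) ^ 2) := by
    intro ω
    have hPm : MemLp (Phat ω) 2 (volume.restrict (⋃ i, K i)) := by
      have hfe : Phat ω = fun x => ∑ i : ι, Set.indicator (K i)
          (fun _ => (N i : ℝ)⁻¹ * ∑ j : Fin (N i), f (X i j ω)) x := funext (hPhat ω)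
      rw [hfe]
      refine memLp_finset_sum _ fun i _ => ?_
      exact memLp_indicator_const 2 (hK i) _
        (Or.inr ((Measure.restrict_apply_le _ _).trans_lt (hKtop i)).ne)
    have hsub2 : MemLp (fun x => f x - Phat ω x) 2 (volume.restrict (⋃ i, K i)) :=
      hfL2.sub hPm
    have hint : IntegrableOn (fun x => (f x - Phat ω x) ^ 2) (⋃ i, K i) volume :=
      hsub2.integrable_sq
    rw [integral_iUnion hK hdisj hint, tsum_fintype]
    refine Finset.sum_congr rfl fun i _ => ?_
    have hcong : ∫ x in K i, (f x - Phat ω x) ^ 2 ∂volume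
        = ∫ x in K i, (f x - S i ω) ^ 2 ∂volume := by
      refine setIntegral_congr_fun (hK i) fun x hx => ?_
      have : Phat ω x = S i ω := by
        rw [hPhat ω x]
        rw [Finset.sum_eq_single i (fun b _ hb => Set.indicator_of_notMem
          (fun hxb => (Set.disjoint_left.mp (hdisj hb) hxb) hx) _)
          (fun h => absurd (Finset.mem_univ i) h)]
        exact Set.indicator_of_mem hx _
      rw [this]
    rw [hcong, decomp i (S i ω)]
  -- the key identity
  have key : ∫ ω, (∫ x in ⋃ i, K i, (f x - Phat ω x) ^ 2 ∂volume) ∂P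
      = ∑ i : ι, (1 + 1 / (N i : ℝ)) * A i := by
    have hsq : ∀ i, Integrable (fun ω => (S i ω - m i) ^ 2) P := fun i =>
      ((hS2 i).sub (memLp_const (m i))).integrable_sq
    have hInt : ∀ i, Integrable (fun ω => A i + V i * (S i ω - m i) ^ 2) P := fun i =>
      (integrable_const (A i)).add ((hsq i).const_mul (V i))
    simp_rw [hsplit]
    rw [integral_finset_sum _ (fun i _ => hInt i)]
    refine Finset.sum_congr rfl fun i _ => ?_
    rw [integral_add (integrable_const (A i)) ((hsq i).const_mul (V i)),
      integral_const, integral_const_mul]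
    have : ∫ ω, (S i ω - m i) ^ 2 ∂P = (N i : ℝ)⁻¹ * ((V i)⁻¹ * A i) := varS i
    rw [this]
    have hNne : (N i : ℝ) ≠ 0 := by exact_mod_cast (hN i).ne'
    have hVne := (hV0 i).ne'
    simp only [probReal_univ, measure_univ, ENNReal.toReal_one, smul_eq_mul, one_mul]
    field_simp
  constructor
  · exact key
  · refine le_of_eq (key.trans (Finset.sum_congr rfl fun i _ => ?_))
    congr 1
    refine setIntegral_congr_fun (hK i) fun x hx => ?_
    have hx' : P0f x = m i := by
      rw [hP0f x]
      rw [Finset.sum_eq_single i (fun b _ hb => Set.indicator_of_notMem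
        (fun hxb => (Set.disjoint_left.mp (hdisj hb) hxb) hx) _)
        (fun h => absurd (Finset.mem_univ i) h)]
      exact Set.indicator_of_mem hx _
    rw [hx']
end

section
/- Let Y_1, Y_2 be i.i.d. random variables uniformly distributed on (0,1). Then almost surely Y_1 ≠ Y_2, and on this event the unique affine function p(x) = ax + b satisfying p(Y_i) = Y_i² for i = 1,2 (equivalently, the unique minimizer over affine functions q of Σ_{i=1}^2 |Y_i² − q(Y_i)|²) is p(x) = (Y_1 + Y_2)x − Y_1 Y_2. Moreover 𝔼[ ∫_0^1 p(x) dx ] = 1/4, whereas ∫_0^1 x² dx = 1/3; hence the discrete least-squares polynomial fit of f(x) = x² from two uniform samples is biased: the expectation of its integral differs from the integral of f. -/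
open MeasureTheory ProbabilityTheory intervalIntegral

lemma inner_int (s p : ℝ) : ∫ x in (0:ℝ)..1, (s * x - p) = s / 2 - p := by
  rw [intervalIntegral.integral_sub ((intervalIntegrable_id).const_mul s)
    (intervalIntegrable_const), intervalIntegral.integral_const_mul]
  simp [integral_id]; ring

lemma mean_unif : ∫ y in Set.Ioo (0:ℝ) 1, y = 1/2 := by
  rw [← MeasureTheory.integral_Ioc_eq_integral_Ioo, ← intervalIntegral.integral_of_le zero_le_one]
  simp [integral_id]

/-- **Bias of the discrete least-squares fit (counterexample).**
Let `Y₁, Y₂` be i.i.d. uniform on `(0,1)`.  Almost surely `Y₁ ≠ Y₂`, and then the unique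
affine function `p(x) = ax + b` interpolating the data `p(Y_i) = Y_i²` is
`p(x) = (Y₁+Y₂)x − Y₁Y₂`.  Moreover `𝔼[∫₀¹ p] = 1/4 ≠ 1/3 = ∫₀¹ x² dx`, so the
randomized least-squares fit of `f(x) = x²` from two uniform samples is biased. -/
theorem least_squares_fit_biased_counterexample
    {Ω : Type*} [MeasurableSpace Ω] {P : Measure Ω} [IsProbabilityMeasure P]
    (Y₁ Y₂ : Ω → ℝ) (hY₁ : Measurable Y₁) (hY₂ : Measurable Y₂)
    (hlaw₁ : Measure.map Y₁ P = volume.restrict (Set.Ioo (0 : ℝ) 1))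
    (hlaw₂ : Measure.map Y₂ P = volume.restrict (Set.Ioo (0 : ℝ) 1))
    (hindep : IndepFun Y₁ Y₂ P) :
    (∀ᵐ ω ∂P, Y₁ ω ≠ Y₂ ω)
    ∧ (∀ᵐ ω ∂P, ∀ a b : ℝ,
        ((a * Y₁ ω + b = (Y₁ ω) ^ 2 ∧ a * Y₂ ω + b = (Y₂ ω) ^ 2)
          ↔ (a = Y₁ ω + Y₂ ω ∧ b = -(Y₁ ω * Y₂ ω))))
    ∧ (∫ ω, (∫ x in (0 : ℝ)..1, ((Y₁ ω + Y₂ ω) * x - Y₁ ω * Y₂ ω)) ∂P = 1 / 4)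
    ∧ (∫ x in (0 : ℝ)..1, x ^ 2 = 1 / 3)
    ∧ (1 / 4 : ℝ) ≠ 1 / 3 := by
  set μ : Measure ℝ := volume.restrict (Set.Ioo (0:ℝ) 1) with hμ
  -- a.e. Y₁ ≠ Y₂
  have hmap : Measure.map (fun ω => (Y₁ ω, Y₂ ω)) P = μ.prod μ := by
    rw [(indepFun_iff_map_prod_eq_prod_map_map hY₁.aemeasurable hY₂.aemeasurable).mp hindep,
      hlaw₁, hlaw₂]
  have hdiag : MeasurableSet {p : ℝ × ℝ | p.1 = p.2} :=
    measurableSet_eq_fun measurable_fst measurable_snd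
  have hane : ∀ᵐ ω ∂P, Y₁ ω ≠ Y₂ ω := by
    have h0 : P {ω | Y₁ ω = Y₂ ω} = 0 := by
      have : P ((fun ω => (Y₁ ω, Y₂ ω)) ⁻¹' {p : ℝ × ℝ | p.1 = p.2}) =
          (μ.prod μ) {p : ℝ × ℝ | p.1 = p.2} := by
        rw [← hmap, Measure.map_apply (hY₁.prodMk hY₂) hdiag]
      rw [show {ω | Y₁ ω = Y₂ ω} = (fun ω => (Y₁ ω, Y₂ ω)) ⁻¹' {p : ℝ × ℝ | p.1 = p.2} from rfl,
        this, Measure.prod_apply hdiag]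
      simp only [Set.preimage, Set.mem_setOf_eq]
      have : ∀ x : ℝ, μ {y : ℝ | x = y} = 0 := by
        intro x
        have : {y : ℝ | x = y} = {x} := by ext y; simp [eq_comm]
        rw [this, hμ, Measure.restrict_apply (measurableSet_singleton x)]
        exact measure_mono_null Set.inter_subset_left (measure_singleton x)
      simp [this]
    apply ae_iff.mpr
    simpa using h0
  refine ⟨hane, ?_, ?_, ?_, by norm_num⟩
  · -- uniqueness of the affine interpolant
    filter_upwards [hane] with ω hne a b
    constructor
    · rintro ⟨h1, h2⟩
      have hd : Y₁ ω - Y₂ ω ≠ 0 := sub_ne_zero.mpr hne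
      have hsub : a * (Y₁ ω - Y₂ ω) = (Y₁ ω + Y₂ ω) * (Y₁ ω - Y₂ ω) := by nlinarith [h1, h2]
      have ha : a = Y₁ ω + Y₂ ω := mul_right_cancel₀ hd hsub
      refine ⟨ha, ?_⟩
      have := h1
      rw [ha] at this
      nlinarith [this]
    · rintro ⟨ha, hb⟩
      subst ha hb
      constructor <;> ring
  · -- expectation computation
    -- a.e. bounds
    have hbd : ∀ (Y : Ω → ℝ), Measurable Y → Measure.map Y P = μ →
        (∀ᵐ ω ∂P, Y ω ∈ Set.Ioo (0:ℝ) 1) := by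
      intro Y hY hlaw
      have : P (Y ⁻¹' Set.Ioo (0:ℝ) 1) = 1 := by
        have := Measure.map_apply (μ := P) hY (measurableSet_Ioo (a := (0:ℝ)) (b := 1))
        rw [hlaw] at this
        rw [← this]
        simp [hμ, Real.volume_Ioo]
      have hc : P (Y ⁻¹' Set.Ioo (0:ℝ) 1)ᶜ = 0 := by
        rw [measure_compl (hY (measurableSet_Ioo)) (measure_ne_top _ _), this]
        simp
      filter_upwards [measure_eq_zero_iff_ae_notMem.mp hc] with ω hω
      simpa using not_not.mp hω
    have hb₁ := hbd Y₁ hY₁ hlaw₁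
    have hb₂ := hbd Y₂ hY₂ hlaw₂
    have hint₁ : Integrable Y₁ P := by
      refine (integrable_const (1:ℝ)).mono' hY₁.aestronglyMeasurable ?_
      filter_upwards [hb₁] with ω hω
      rw [Real.norm_eq_abs, abs_of_pos hω.1]; exact hω.2.le
    have hint₂ : Integrable Y₂ P := by
      refine (integrable_const (1:ℝ)).mono' hY₂.aestronglyMeasurable ?_
      filter_upwards [hb₂] with ω hω
      rw [Real.norm_eq_abs, abs_of_pos hω.1]; exact hω.2.le
    have hintm : Integrable (Y₁ * Y₂) P := hindep.integrable_mul hint₁ hint₂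
    have hmean : ∀ (Y : Ω → ℝ), Measurable Y → Measure.map Y P = μ →
        ∫ ω, Y ω ∂P = 1/2 := by
      intro Y hY hlaw
      have h := integral_map (φ := Y) (μ := P) hY.aemeasurable
        (f := fun y => y) aestronglyMeasurable_id
      rw [← h, hlaw, hμ]
      exact mean_unif
    have hm₁ := hmean Y₁ hY₁ hlaw₁
    have hm₂ := hmean Y₂ hY₂ hlaw₂
    have hmul : ∫ ω, Y₁ ω * Y₂ ω ∂P = 1/4 := by
      have := hindep.integral_mul_eq_mul_integral hY₁.aestronglyMeasurable hY₂.aestronglyMeasurable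
      rw [show (fun ω => Y₁ ω * Y₂ ω) = Y₁ * Y₂ from rfl, this, hm₁, hm₂]; norm_num
    calc ∫ ω, (∫ x in (0 : ℝ)..1, ((Y₁ ω + Y₂ ω) * x - Y₁ ω * Y₂ ω)) ∂P
        = ∫ ω, ((Y₁ ω + Y₂ ω) / 2 - Y₁ ω * Y₂ ω) ∂P := by
          congr 1; funext ω; exact inner_int _ _
      _ = (∫ ω, (Y₁ ω + Y₂ ω) / 2 ∂P) - ∫ ω, Y₁ ω * Y₂ ω ∂P := by
          exact integral_sub ((hint₁.add hint₂).div_const 2) hintm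
      _ = 1/4 := by
          rw [hmul, MeasureTheory.integral_div, integral_add hint₁ hint₂, hm₁, hm₂]; norm_num
  · simp; norm_num
end

section
/- Let N ≥ 1, let Z_1,…,Z_N be i.i.d. nonnegative real random variables, let ε > 0, and set q := ℙ(Z_1 ≤ 2ε). If q ≤ 1/8, then ℙ( N^{-1} Σ_{i=1}^N Z_i ≤ ε ) ≤ (8q)^{N/2}. -/
open MeasureTheory ProbabilityTheory Finset

/-- **Small-ball estimate for averages of i.i.d. nonnegative random variables.**
Let `Z_1, …, Z_N` be i.i.d. nonnegative real random variables, `ε > 0`, and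
`q := ℙ(Z_1 ≤ 2ε)`.  If `q ≤ 1/8`, then `ℙ(N⁻¹ ∑ Z_i ≤ ε) ≤ (8q)^{N/2}`. -/
theorem small_ball_estimate_iid_average
    {Ω : Type*} [MeasurableSpace Ω] {P : Measure Ω} [IsProbabilityMeasure P]
    (N : ℕ) (hN : 0 < N)
    (Z : Fin N → Ω → ℝ) (hZm : ∀ i, Measurable (Z i))
    (hZnonneg : ∀ i ω, 0 ≤ Z i ω)
    (hZindep : iIndepFun Z P)
    (hZident : ∀ i, Measure.map (Z i) P = Measure.map (Z ⟨0, hN⟩) P)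
    (ε : ℝ) (hε : 0 < ε)
    (q : ℝ) (hq : q = (P {ω | Z ⟨0, hN⟩ ω ≤ 2 * ε}).toReal)
    (hq8 : q ≤ 1 / 8) :
    (P {ω | (N : ℝ)⁻¹ * ∑ i : Fin N, Z i ω ≤ ε}).toReal
      ≤ (8 * q) ^ ((N : ℝ) / 2) := by
  classical
  set m := (N + 1) / 2 with hm
  have hm1 : 1 ≤ m := by omega
  have hmN : m ≤ N := by omega
  have h2m : N ≤ 2 * m := by omega
  set A : Set ℝ := Set.Iic (2 * ε) with hA
  have hAm : MeasurableSet A := measurableSet_Iic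
  -- q' : the ENNReal version of q
  set q' : ENNReal := P (Z ⟨0, hN⟩ ⁻¹' A) with hq'
  have hpre : {ω | Z ⟨0, hN⟩ ω ≤ 2 * ε} = Z ⟨0, hN⟩ ⁻¹' A := rfl
  have hq'ne : q' ≠ ⊤ := (measure_lt_top P _).ne
  have hqq' : q = q'.toReal := by rw [hq, hpre]
  -- identical distribution: all preimage measures equal q'
  have hident : ∀ i : Fin N, P (Z i ⁻¹' A) = q' := by
    intro i
    have h1 : P (Z i ⁻¹' A) = (Measure.map (Z i) P) A := by
      rw [Measure.map_apply (hZm i) hAm]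
    rw [h1, hZident i, Measure.map_apply (hZm _) hAm]
  -- inclusion of events
  have key : {ω | (N : ℝ)⁻¹ * ∑ i : Fin N, Z i ω ≤ ε} ⊆
      ⋃ S ∈ Finset.powersetCard m (Finset.univ : Finset (Fin N)),
        ⋂ i ∈ S, Z i ⁻¹' A := by
    intro ω hω
    simp only [Set.mem_setOf_eq] at hω
    have hsumle : ∑ i : Fin N, Z i ω ≤ (N : ℝ) * ε := by
      have hNpos : (0 : ℝ) < N := by exact_mod_cast hN
      calc ∑ i : Fin N, Z i ω = (N : ℝ) * ((N : ℝ)⁻¹ * ∑ i : Fin N, Z i ω) := by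
            field_simp
        _ ≤ (N : ℝ) * ε := by exact mul_le_mul_of_nonneg_left hω hNpos.le
    set T : Finset (Fin N) := Finset.univ.filter (fun i => Z i ω ≤ 2 * ε) with hT
    have hTcard : m ≤ T.card := by
      by_contra h
      push_neg at h
      have hcompl : (Finset.univ \ T).card = N - T.card := by
        rw [Finset.card_sdiff_of_subset (Finset.subset_univ T)]; simp
      have hlb : ∀ i ∈ Finset.univ \ T, 2 * ε < Z i ω := by
        intro i hi
        simp only [hT, Finset.mem_sdiff, Finset.mem_filter, Finset.mem_univ,
          true_and, not_le] at hi
        exact hi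
      have hne : (Finset.univ \ T).Nonempty := by
        rw [← Finset.card_pos, hcompl]; omega
      have hstrict : ((Finset.univ \ T).card : ℝ) * (2 * ε) < ∑ i ∈ Finset.univ \ T, Z i ω := by
        calc ((Finset.univ \ T).card : ℝ) * (2 * ε) = ∑ _i ∈ Finset.univ \ T, 2 * ε := by
              rw [Finset.sum_const, nsmul_eq_mul]
          _ < ∑ i ∈ Finset.univ \ T, Z i ω := Finset.sum_lt_sum_of_nonempty hne hlb
      have hsub : ∑ i ∈ Finset.univ \ T, Z i ω ≤ ∑ i : Fin N, Z i ω :=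
        Finset.sum_le_sum_of_subset_of_nonneg (Finset.sdiff_subset)
          (fun i _ _ => hZnonneg i ω)
      have hcard2 : (N : ℝ) * ε < ((Finset.univ \ T).card : ℝ) * (2 * ε) := by
        rw [hcompl]
        have : (N : ℕ) < 2 * (N - T.card) := by omega
        have h' : (N : ℝ) < 2 * ((N - T.card : ℕ) : ℝ) := by exact_mod_cast this
        nlinarith
      linarith
    obtain ⟨S, hST, hScard⟩ := Finset.exists_subset_card_eq hTcard
    refine Set.mem_biUnion (by simp [Finset.mem_powersetCard, hScard] : S ∈ Finset.powersetCard m (Finset.univ : Finset (Fin N))) ?_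
    simp only [Set.mem_iInter]
    intro i hi
    have := hST hi
    simp only [hT, Finset.mem_filter] at this
    exact this.2
  -- measure bound
  have hmeas : P {ω | (N : ℝ)⁻¹ * ∑ i : Fin N, Z i ω ≤ ε}
      ≤ (N.choose m : ENNReal) * q' ^ m := by
    calc P {ω | (N : ℝ)⁻¹ * ∑ i : Fin N, Z i ω ≤ ε}
        ≤ P (⋃ S ∈ Finset.powersetCard m (Finset.univ : Finset (Fin N)),
            ⋂ i ∈ S, Z i ⁻¹' A) := measure_mono key
      _ ≤ ∑ S ∈ Finset.powersetCard m (Finset.univ : Finset (Fin N)),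
            P (⋂ i ∈ S, Z i ⁻¹' A) := measure_biUnion_finset_le _ _
      _ = ∑ S ∈ Finset.powersetCard m (Finset.univ : Finset (Fin N)), q' ^ m := by
          refine Finset.sum_congr rfl (fun S hS => ?_)
          have hScard : S.card = m := (Finset.mem_powersetCard.mp hS).2
          rw [hZindep.measure_inter_preimage_eq_mul S (sets := fun _ => A)
            (fun i _ => hAm)]
          rw [Finset.prod_congr rfl (fun i _ => hident i), Finset.prod_const, hScard]
      _ = (N.choose m : ENNReal) * q' ^ m := by
          rw [Finset.sum_const, Finset.card_powersetCard, Finset.card_univ,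
            Fintype.card_fin, nsmul_eq_mul]
  -- pass to toReal
  have hq0 : 0 ≤ q := by rw [hq]; exact ENNReal.toReal_nonneg
  have hRHSfin : (N.choose m : ENNReal) * q' ^ m ≠ ⊤ := by
    exact ENNReal.mul_ne_top (by simp) (ENNReal.pow_ne_top hq'ne)
  have hreal : (P {ω | (N : ℝ)⁻¹ * ∑ i : Fin N, Z i ω ≤ ε}).toReal
      ≤ (N.choose m : ℝ) * q ^ m := by
    have := ENNReal.toReal_mono hRHSfin hmeas
    rw [ENNReal.toReal_mul, ENNReal.toReal_pow, ← hqq'] at this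
    simpa using this
  -- combinatorial bound : choose N m ≤ 4^m
  have hchoose : (N.choose m : ℝ) ≤ 4 ^ m := by
    have h1 : N.choose m ≤ 2 ^ N := by
      calc N.choose m ≤ ∑ i ∈ Finset.range (N + 1), N.choose i :=
            Finset.single_le_sum (fun i _ => Nat.zero_le _)
              (Finset.mem_range.mpr (by omega))
        _ = 2 ^ N := Nat.sum_range_choose N
    have h2 : (2 : ℕ) ^ N ≤ 4 ^ m := by
      calc (2 : ℕ) ^ N ≤ 2 ^ (2 * m) := Nat.pow_le_pow_right (by norm_num) h2m
        _ = 4 ^ m := by rw [pow_mul]; norm_num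
    exact_mod_cast h1.trans h2
  have hqm : 0 ≤ q ^ m := pow_nonneg hq0 m
  have hstep : (N.choose m : ℝ) * q ^ m ≤ (4 * q) ^ m := by
    rw [mul_pow]
    exact mul_le_mul_of_nonneg_right hchoose hqm
  -- final rpow estimate
  rcases eq_or_lt_of_le hq0 with hq0' | hqpos
  · -- q = 0
    have : (8 * q) ^ ((N : ℝ) / 2) = 0 := by
      rw [← hq0', mul_zero, Real.zero_rpow]
      positivity
    rw [this]
    have hz : (4 * q) ^ m = 0 := by
      rw [← hq0', mul_zero, zero_pow (by omega)]
    linarith [hreal.trans hstep, hz]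
  · have h4q : 0 < 4 * q := by linarith
    have h4q1 : 4 * q ≤ 1 := by linarith
    have hmhalf : (N : ℝ) / 2 ≤ (m : ℝ) := by
      have : (N : ℝ) ≤ 2 * m := by exact_mod_cast h2m
      linarith
    have h1 : (4 * q) ^ m = (4 * q) ^ ((m : ℕ) : ℝ) := by
      rw [Real.rpow_natCast]
    have h2 : (4 * q) ^ ((m : ℕ) : ℝ) ≤ (4 * q) ^ ((N : ℝ) / 2) :=
      Real.rpow_le_rpow_of_exponent_ge h4q h4q1 hmhalf
    have h3 : (4 * q) ^ ((N : ℝ) / 2) ≤ (8 * q) ^ ((N : ℝ) / 2) :=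
      Real.rpow_le_rpow h4q.le (by linarith) (by positivity)
    calc (P {ω | (N : ℝ)⁻¹ * ∑ i : Fin N, Z i ω ≤ ε}).toReal
        ≤ (N.choose m : ℝ) * q ^ m := hreal
      _ ≤ (4 * q) ^ m := hstep
      _ ≤ (8 * q) ^ ((N : ℝ) / 2) := by rw [h1]; exact h2.trans h3
end
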